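/- Group-level thresholding identity under an orthonormal design: assume X^T X = I_p and let β̂^{ols} = X^T y. If β̂ is a minimizer of the LES objective Q and β̂_{kj} ≠ 0 for every j = 1, …, p_k in group k, then Σ_{j=1}^{p_k} |β̂_{kj}| = Σ_{j=1}^{p_k} |β̂^{ols}_{kj}| − nλα w_k. -/

import Mathlib

/-- **Group-level thresholding identity under an orthonormal design.**
Assume `XᵀX = I` and let `β̂ᵒˡˢ = Xᵀ y`.  If `β̂` is a minimizer of the LES
objective `Q` and `β̂ kj ≠ 0` for every `j` in group `k`, then
`∑ j, |β̂ kj| = ∑ j, |β̂ᵒˡˢ kj| - n λ α w k`. -/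
theorem les_group_threshold (n K : ℕ) (hn : 0 < n) (hK : 0 < K)
    (p : Fin K → ℕ) (hp : ∀ k, 1 ≤ p k)
    (X : Fin n → (Σ k : Fin K, Fin (p k)) → ℝ) (y : Fin n → ℝ)
    (horth : ∀ j j' : Σ k : Fin K, Fin (p k),
      ∑ i : Fin n, X i j * X i j' = if j = j' then 1 else 0)
    (βols : (Σ k : Fin K, Fin (p k)) → ℝ)
    (hols : ∀ j : Σ k : Fin K, Fin (p k), βols j = ∑ i : Fin n, X i j * y i)
    (lam α : ℝ) (hlam : 0 < lam) (hα : 0 < α)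
    (w : Fin K → ℝ) (hw : ∀ k, 0 ≤ w k)
    (βh : (Σ k : Fin K, Fin (p k)) → ℝ)
    (hmin : IsMinOn
      (fun β : (Σ k : Fin K, Fin (p k)) → ℝ =>
        (1 / (2 * (n : ℝ))) * ∑ i : Fin n, (y i - ∑ j' : Σ k : Fin K, Fin (p k), X i j' * β j') ^ 2
          + lam * ∑ l : Fin K, w l * Real.log (∑ j' : Fin (p l), Real.exp (α * |β ⟨l, j'⟩|)))
      Set.univ βh)
    (k : Fin K) (hne : ∀ j : Fin (p k), βh ⟨k, j⟩ ≠ 0) :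
    ∑ j : Fin (p k), |βh ⟨k, j⟩| =
      (∑ j : Fin (p k), |βols ⟨k, j⟩|) - (n : ℝ) * lam * α * w k := by
  have hnR : (0:ℝ) < (n:ℝ) := by exact_mod_cast hn
  have hpk : Nonempty (Fin (p k)) := Fin.pos_iff_nonempty.mp (hp k)
  set S : ℝ := ∑ j' : Fin (p k), Real.exp (α * |βh ⟨k, j'⟩|) with hSdef
  have hSpos : 0 < S := Finset.sum_pos (fun _ _ => Real.exp_pos _) Finset.univ_nonempty
  have hFle : ∀ u : (Σ k : Fin K, Fin (p k)) → ℝ,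
      (1 / (2 * (n : ℝ))) * ∑ i : Fin n, (y i - ∑ j' : Σ k : Fin K, Fin (p k), X i j' * βh j') ^ 2
        + lam * ∑ l : Fin K, w l * Real.log (∑ j' : Fin (p l), Real.exp (α * |βh ⟨l, j'⟩|))
      ≤ (1 / (2 * (n : ℝ))) * ∑ i : Fin n, (y i - ∑ j' : Σ k : Fin K, Fin (p k), X i j' * u j') ^ 2
        + lam * ∑ l : Fin K, w l * Real.log (∑ j' : Fin (p l), Real.exp (α * |u ⟨l, j'⟩|)) :=
    fun u => isMinOn_iff.mp hmin u (Set.mem_univ u)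
  have key : ∀ j : Fin (p k), |βols ⟨k, j⟩| - |βh ⟨k, j⟩| =
      (n : ℝ) * lam * α * w k * (Real.exp (α * |βh ⟨k, j⟩|) / S) := by
    intro j
    set j0 : (Σ k : Fin K, Fin (p k)) := ⟨k, j⟩ with hj0
    set t0 : ℝ := βh j0 with ht0def
    have ht0 : t0 ≠ 0 := hne j
    set E : ℝ := Real.exp (α * |t0|) with hEdef
    set C : ℝ := ∑ j'' ∈ Finset.univ \ {j}, Real.exp (α * |βh ⟨k, j''⟩|) with hCdef
    have hCE : S = C + E := by
      rw [hSdef, Finset.sum_eq_sum_sdiff_singleton_add (Finset.mem_univ j)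
        (fun j'' => Real.exp (α * |βh ⟨k, j''⟩|))]
    have hC0 : 0 ≤ C := Finset.sum_nonneg fun _ _ => (Real.exp_pos _).le
    have hCEpos : 0 < C + E := by
      have := Real.exp_pos (α * |t0|); rw [hEdef]; linarith
    set b : ℝ := βols j0 - t0 with hbdef
    set R : ℝ := ∑ i : Fin n, (y i - ∑ j' : Σ k : Fin K, Fin (p k), X i j' * βh j') ^ 2 with hRdef
    set D : ℝ := ∑ l ∈ Finset.univ \ {k},
        w l * Real.log (∑ j'' : Fin (p l), Real.exp (α * |βh ⟨l, j''⟩|)) with hDdef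
    set g : ℝ → ℝ := fun t =>
      (1 / (2 * (n : ℝ))) * ∑ i : Fin n,
          (y i - ∑ j' : Σ k : Fin K, Fin (p k), X i j' * Function.update βh j0 t j') ^ 2
        + lam * ∑ l : Fin K,
            w l * Real.log (∑ j'' : Fin (p l),
              Real.exp (α * |Function.update βh j0 t ⟨l, j''⟩|)) with hgdef
    -- g is a local (in fact global) minimum at t0
    have hloc : IsLocalMin g t0 := by
      apply Filter.Eventually.of_forall
      intro t
      have h0 : Function.update βh j0 t0 = βh := by
        rw [ht0def]; exact Function.update_eq_self j0 βh
      have := hFle (Function.update βh j0 t)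
      simp only [hgdef, h0]
      exact this
    -- explicit formula for g
    have hgeq : g = fun t : ℝ =>
        (1 / (2 * (n : ℝ))) * (R - 2 * b * (t - t0) + (t - t0) ^ 2)
          + lam * (w k * Real.log (C + Real.exp (α * |t|)) + D) := by
      funext t
      have hrow : ∀ i : Fin n,
          ∑ j' : Σ k : Fin K, Fin (p k), X i j' * Function.update βh j0 t j'
            = (∑ j' : Σ k : Fin K, Fin (p k), X i j' * βh j') + X i j0 * (t - t0) := by
        intro i
        have hfun : (fun j' : Σ k : Fin K, Fin (p k) => X i j' * Function.update βh j0 t j')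
            = Function.update (fun j' => X i j' * βh j') j0 (X i j0 * t) := by
          funext j'
          by_cases h : j' = j0
          · subst h; simp
          · simp [Function.update_of_ne h]
        rw [hfun, Finset.sum_update_of_mem (Finset.mem_univ j0),
          Finset.sum_eq_sum_sdiff_singleton_add (Finset.mem_univ j0)
            (fun j' => X i j' * βh j')]
        ring
      have hb : ∑ i : Fin n, (y i - ∑ j' : Σ k : Fin K, Fin (p k), X i j' * βh j') * X i j0 = b := by
        have step1 : ∀ i : Fin n,
            (y i - ∑ j' : Σ k : Fin K, Fin (p k), X i j' * βh j') * X i j0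
              = X i j0 * y i - ∑ j' : Σ k : Fin K, Fin (p k), (X i j0 * X i j') * βh j' := by
          intro i
          rw [sub_mul, Finset.sum_mul, mul_comm (y i) (X i j0)]
          congr 1
          exact Finset.sum_congr rfl fun j' _ => by ring
        calc ∑ i : Fin n, (y i - ∑ j' : Σ k : Fin K, Fin (p k), X i j' * βh j') * X i j0
            = ∑ i : Fin n, (X i j0 * y i
                - ∑ j' : Σ k : Fin K, Fin (p k), (X i j0 * X i j') * βh j') :=
              Finset.sum_congr rfl fun i _ => step1 i
          _ = (∑ i : Fin n, X i j0 * y i)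
                - ∑ i : Fin n, ∑ j' : Σ k : Fin K, Fin (p k), (X i j0 * X i j') * βh j' :=
              Finset.sum_sub_distrib _ _
          _ = βols j0 - ∑ j' : Σ k : Fin K, Fin (p k), (∑ i : Fin n, X i j0 * X i j') * βh j' := by
              rw [hols j0, Finset.sum_comm]
              congr 1
              exact Finset.sum_congr rfl fun j' _ => (Finset.sum_mul _ _ _).symm
          _ = βols j0 - t0 := by
              congr 1
              calc ∑ j' : Σ k : Fin K, Fin (p k), (∑ i : Fin n, X i j0 * X i j') * βh j'
                  = ∑ j' : Σ k : Fin K, Fin (p k), (if j0 = j' then (1:ℝ) else 0) * βh j' :=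
                    Finset.sum_congr rfl fun j' _ => by rw [horth j0 j']
                _ = βh j0 := by simp
      have hXX : ∑ i : Fin n, X i j0 * X i j0 = 1 := by rw [horth j0 j0]; simp
      have hquad : ∑ i : Fin n,
          (y i - ∑ j' : Σ k : Fin K, Fin (p k), X i j' * Function.update βh j0 t j') ^ 2
            = R - 2 * b * (t - t0) + (t - t0) ^ 2 := by
        have step : ∀ i : Fin n,
            (y i - ∑ j' : Σ k : Fin K, Fin (p k), X i j' * Function.update βh j0 t j') ^ 2
              = (y i - ∑ j' : Σ k : Fin K, Fin (p k), X i j' * βh j') ^ 2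
                - ((y i - ∑ j' : Σ k : Fin K, Fin (p k), X i j' * βh j') * X i j0)
                    * (2 * (t - t0))
                + (X i j0 * X i j0) * ((t - t0) ^ 2) := by
          intro i
          rw [hrow i]; ring
        calc ∑ i : Fin n,
            (y i - ∑ j' : Σ k : Fin K, Fin (p k), X i j' * Function.update βh j0 t j') ^ 2
            = ∑ i : Fin n,
                ((y i - ∑ j' : Σ k : Fin K, Fin (p k), X i j' * βh j') ^ 2
                  - ((y i - ∑ j' : Σ k : Fin K, Fin (p k), X i j' * βh j') * X i j0)
                      * (2 * (t - t0))
                  + (X i j0 * X i j0) * ((t - t0) ^ 2)) :=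
              Finset.sum_congr rfl fun i _ => step i
          _ = R - b * (2 * (t - t0)) + 1 * ((t - t0) ^ 2) := by
              rw [Finset.sum_add_distrib, Finset.sum_sub_distrib,
                ← Finset.sum_mul, ← Finset.sum_mul, hb, hXX, hRdef]
          _ = R - 2 * b * (t - t0) + (t - t0) ^ 2 := by ring
      have hlogsum : ∑ l : Fin K,
          w l * Real.log (∑ j'' : Fin (p l),
            Real.exp (α * |Function.update βh j0 t ⟨l, j''⟩|))
            = w k * Real.log (C + Real.exp (α * |t|)) + D := by
        rw [Finset.sum_eq_sum_sdiff_singleton_add (Finset.mem_univ k)]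
        have h1 : ∑ l ∈ Finset.univ \ {k},
            w l * Real.log (∑ j'' : Fin (p l),
              Real.exp (α * |Function.update βh j0 t ⟨l, j''⟩|)) = D := by
          rw [hDdef]
          refine Finset.sum_congr rfl fun l hl => ?_
          have hlk : l ≠ k := by
            simp only [Finset.mem_sdiff, Finset.mem_singleton] at hl; exact hl.2
          congr 2
          refine Finset.sum_congr rfl fun j'' _ => ?_
          have hne' : (⟨l, j''⟩ : Σ k : Fin K, Fin (p k)) ≠ j0 := by
            intro he; exact hlk (congrArg Sigma.fst he)
          rw [Function.update_of_ne hne']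
        have h2 : w k * Real.log (∑ j'' : Fin (p k),
            Real.exp (α * |Function.update βh j0 t ⟨k, j''⟩|))
              = w k * Real.log (C + Real.exp (α * |t|)) := by
          have hfun : (fun j'' : Fin (p k) =>
              Real.exp (α * |Function.update βh j0 t ⟨k, j''⟩|))
                = Function.update (fun j'' : Fin (p k) =>
                    Real.exp (α * |βh ⟨k, j''⟩|)) j (Real.exp (α * |t|)) := by
            funext j''
            by_cases h : j'' = j
            · subst h; simp [hj0]
            · have hne' : (⟨k, j''⟩ : Σ k : Fin K, Fin (p k)) ≠ j0 := by
                rw [hj0]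
                intro he
                exact h (eq_of_heq (Sigma.mk.inj_iff.mp he).2)
              rw [Function.update_of_ne hne', Function.update_of_ne h]
          rw [hfun, Finset.sum_update_of_mem (Finset.mem_univ j), add_comm, hCdef]
        rw [h1, h2, add_comm]
      simp only [hgdef]
      rw [hquad, hlogsum]
    -- derivative of g at t0
    have hσdef : ∃ σ : ℝ, (σ * σ = 1 ∧ σ * t0 = |t0| ∧ |σ| = 1) ∧
        HasDerivAt (fun t : ℝ => |t|) σ t0 := by
      rcases ht0.lt_or_gt with hneg | hpos
      · refine ⟨-1, ⟨by ring, by rw [abs_of_neg hneg]; ring, by norm_num⟩, ?_⟩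
        have hid : HasDerivAt (fun t : ℝ => -t) (-1) t0 := (hasDerivAt_id t0).neg
        refine hid.congr_of_eventuallyEq ?_
        filter_upwards [Iio_mem_nhds hneg] with x hx
        exact abs_of_neg hx
      · refine ⟨1, ⟨by ring, by rw [abs_of_pos hpos]; ring, by norm_num⟩, ?_⟩
        have hid : HasDerivAt (fun t : ℝ => t) 1 t0 := hasDerivAt_id t0
        refine hid.congr_of_eventuallyEq ?_
        filter_upwards [Ioi_mem_nhds hpos] with x hx
        exact abs_of_pos hx
    obtain ⟨σ, ⟨hσσ, hσt, hσabs⟩, habs⟩ := hσdef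
    have h1 : HasDerivAt (fun t : ℝ => t - t0) 1 t0 := (hasDerivAt_id t0).sub_const t0
    have h2 : HasDerivAt (fun t : ℝ => (t - t0) ^ 2) (0:ℝ) t0 := by
      have h := h1.pow 2
      have e : ((2:ℕ):ℝ) * (t0 - t0) ^ (2 - 1) * 1 = 0 := by norm_num
      rwa [e] at h
    have h3 : HasDerivAt (fun t : ℝ => 2 * b * (t - t0)) (2 * b * 1) t0 := h1.const_mul (2 * b)
    have h4 : HasDerivAt (fun t : ℝ => R - 2 * b * (t - t0) + (t - t0) ^ 2) (-(2 * b)) t0 := by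
      have h := ((hasDerivAt_const t0 R).sub h3).add h2
      have e : (0:ℝ) - 2 * b * 1 + 0 = -(2 * b) := by ring
      rwa [e] at h
    have h5 : HasDerivAt (fun t : ℝ => (1 / (2 * (n : ℝ))) * (R - 2 * b * (t - t0) + (t - t0) ^ 2))
        (-(b / (n : ℝ))) t0 := by
      have h := h4.const_mul (1 / (2 * (n : ℝ)))
      have e : (1 / (2 * (n : ℝ))) * (-(2 * b)) = -(b / (n : ℝ)) := by
        field_simp
      rwa [e] at h
    have h6 : HasDerivAt (fun t : ℝ => α * |t|) (α * σ) t0 := habs.const_mul α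
    have h7 : HasDerivAt (fun t : ℝ => Real.exp (α * |t|)) (Real.exp (α * |t0|) * (α * σ)) t0 :=
      h6.exp
    have h8 : HasDerivAt (fun t : ℝ => C + Real.exp (α * |t|))
        (Real.exp (α * |t0|) * (α * σ)) t0 := h7.const_add C
    have h9 : HasDerivAt (fun t : ℝ => Real.log (C + Real.exp (α * |t|)))
        ((Real.exp (α * |t0|) * (α * σ)) / (C + Real.exp (α * |t0|))) t0 := by
      apply h8.log
      have hpos' : (0:ℝ) < C + Real.exp (α * |t0|) := by
        rw [hEdef] at hCEpos; exact hCEpos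
      exact hpos'.ne'
    have h10 : HasDerivAt (fun t : ℝ => lam * (w k * Real.log (C + Real.exp (α * |t|)) + D))
        (lam * (w k * (α * σ * E / S))) t0 := by
      have h := ((h9.const_mul (w k)).add_const D).const_mul lam
      rw [← hEdef, ← hCE] at h
      have e : lam * (w k * (E * (α * σ) / S)) = lam * (w k * (α * σ * E / S)) := by ring
      rwa [e] at h
    have hder : HasDerivAt g (-(b / (n : ℝ)) + lam * (w k * (α * σ * E / S))) t0 := by
      rw [hgeq]; exact h5.add h10
    have hd0 : -(b / (n : ℝ)) + lam * (w k * (α * σ * E / S)) = 0 := by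
      rw [← hder.deriv]; exact hloc.deriv_eq_zero
    have hb2 : b = (n : ℝ) * (lam * (w k * (α * σ * E / S))) := by
      have h1' : lam * (w k * (α * σ * E / S)) = b / (n : ℝ) := by linarith
      rw [h1', mul_div_cancel₀ b hnR.ne']
    have hσb : σ * b = (n : ℝ) * lam * α * w k * (E / S) := by
      rw [hb2]
      have : σ * ((n : ℝ) * (lam * (w k * (α * σ * E / S))))
          = (σ * σ) * ((n : ℝ) * lam * α * w k * (E / S)) := by ring
      rw [this, hσσ, one_mul]
    have hσβ : σ * βols j0 = |t0| + (n : ℝ) * lam * α * w k * (E / S) := by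
      have hβ : βols j0 = t0 + b := by rw [hbdef]; ring
      calc σ * βols j0 = σ * t0 + σ * b := by rw [hβ]; ring
        _ = |t0| + (n : ℝ) * lam * α * w k * (E / S) := by rw [hσt, hσb]
    have hEpos : 0 < E := by rw [hEdef]; exact Real.exp_pos _
    have hnonneg : 0 ≤ (n : ℝ) * lam * α * w k * (E / S) :=
      mul_nonneg (mul_nonneg (mul_nonneg (mul_nonneg hnR.le hlam.le) hα.le) (hw k))
        (div_nonneg hEpos.le hSpos.le)
    have habsols : |βols j0| = σ * βols j0 := by
      have h0 : 0 ≤ σ * βols j0 := by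
        rw [hσβ]; have := abs_nonneg t0; linarith
      calc |βols j0| = |σ| * |βols j0| := by rw [hσabs, one_mul]
        _ = |σ * βols j0| := (abs_mul σ _).symm
        _ = σ * βols j0 := abs_of_nonneg h0
    rw [habsols, hσβ]
    ring
  -- sum the per-coordinate identities
  have hsum : ∑ j : Fin (p k), (|βols ⟨k, j⟩| - |βh ⟨k, j⟩|) = (n : ℝ) * lam * α * w k := by
    calc ∑ j : Fin (p k), (|βols ⟨k, j⟩| - |βh ⟨k, j⟩|)
        = ∑ j : Fin (p k), (n : ℝ) * lam * α * w k * (Real.exp (α * |βh ⟨k, j⟩|) / S) :=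
          Finset.sum_congr rfl fun j _ => key j
      _ = (n : ℝ) * lam * α * w k * ((∑ j : Fin (p k), Real.exp (α * |βh ⟨k, j⟩|)) / S) := by
          rw [← Finset.mul_sum, Finset.sum_div]
      _ = (n : ℝ) * lam * α * w k := by
          rw [← hSdef, div_self hSpos.ne', mul_one]
  rw [Finset.sum_sub_distrib] at hsum
  linarith
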